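/- Let A, B be positive semidefinite matrices and let P be a nonzero positive semidefinite matrix whose support is contained in supp(A) ∩ supp(B) and in an eigenspace of the generalized geometric mean M(A,B) with eigenvalue λ. Then λ > 0 and the support of P is contained in the eigenspace of M(B⁺, A⁺) with eigenvalue 1/λ. -/

import Mathlib

open scoped ComplexOrder

open Classical in
open scoped MatrixOrder in
/-- The unique positive semidefinite square root of a positive semidefinite matrix
(junk value 0 otherwise). -/
noncomputable def psqrt {n : Type*} [Fintype n] [DecidableEq n] (X : Matrix n n ℂ) :
    Matrix n n ℂ :=
  if h : X.PosSemidef then CFC.sqrt X else 0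

/-- The range (support) of a matrix, i.e. the orthogonal complement of its kernel. -/
noncomputable def msupp {n : Type*} [Fintype n] [DecidableEq n] (X : Matrix n n ℂ) :
    Submodule ℂ (EuclideanSpace ℂ n) :=
  (LinearMap.ker (Matrix.toEuclideanLin X))ᗮ

/-- The kernel of a matrix, as a subspace of Euclidean space. -/
noncomputable def mker {n : Type*} [Fintype n] [DecidableEq n] (X : Matrix n n ℂ) :
    Submodule ℂ (EuclideanSpace ℂ n) :=
  LinearMap.ker (Matrix.toEuclideanLin X)

/-- The generalized geometric mean M(A,B) = √A · √(√(A⁺) B √(A⁺)) · √A, where Ap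
stands for the Moore–Penrose pseudoinverse A⁺ of A. -/
noncomputable def geoMean {n : Type*} [Fintype n] [DecidableEq n]
    (A Ap B : Matrix n n ℂ) : Matrix n n ℂ :=
  psqrt A * psqrt (psqrt Ap * B * psqrt Ap) * psqrt A

open Matrix in
/-- `Ap` is the Moore–Penrose pseudoinverse of `A` (the four Penrose conditions). -/
def IsMPInv {n : Type*} [Fintype n] [DecidableEq n] (A Ap : Matrix n n ℂ) : Prop :=
  A * Ap * A = A ∧ Ap * A * Ap = Ap ∧ (A * Ap)ᴴ = A * Ap ∧ (Ap * A)ᴴ = Ap * A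

namespace GeoAux

open Matrix

variable {n : Type*} [Fintype n] [DecidableEq n]

open scoped MatrixOrder in
lemma psqrt_eq {X : Matrix n n ℂ} (h : X.PosSemidef) : psqrt X = CFC.sqrt X := dif_pos h

open scoped MatrixOrder in
lemma psqrt_posSemidef {X : Matrix n n ℂ} (h : X.PosSemidef) : (psqrt X).PosSemidef := by
  rw [psqrt_eq h]; exact (CFC.sqrt_nonneg X).posSemidef

lemma psqrt_herm {X : Matrix n n ℂ} (h : X.PosSemidef) : (psqrt X)ᴴ = psqrt X :=
  (psqrt_posSemidef h).1

open scoped MatrixOrder in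
lemma psqrt_mul_self {X : Matrix n n ℂ} (h : X.PosSemidef) : psqrt X * psqrt X = X := by
  rw [psqrt_eq h]; exact CFC.sqrt_mul_sqrt_self X h.nonneg

open scoped MatrixOrder in
lemma psqrt_unique {X Y : Matrix n n ℂ} (hX : X.PosSemidef) (hY : Y.PosSemidef)
    (h : Y * Y = X) : Y = psqrt X := by
  rw [psqrt_eq hX]; exact (CFC.sqrt_unique h (hb := hY.nonneg)).symm

open scoped MatrixOrder in
lemma commute_psqrt {X Y : Matrix n n ℂ} (hX : X.PosSemidef) (h : Y * X = X * Y) :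
    Y * psqrt X = psqrt X * Y := by
  rw [psqrt_eq hX]
  exact ((Commute.cfcₙ_nnreal (h.symm : Commute X Y) NNReal.sqrt).symm).eq

lemma absorb_left {X Q : Matrix n n ℂ} (hX : X.PosSemidef) (hQh : Qᴴ = Q)
    (hQi : Q * Q = Q) (hQX : Q * X = X) : Q * psqrt X = psqrt X := by
  have hXQ : X * Q = X := by
    calc X * Q = (Qᴴ * Xᴴ)ᴴ := by simp [Matrix.conjTranspose_mul]
      _ = (Q * X)ᴴ := by rw [hQh, hX.1]
      _ = X := by rw [hQX, hX.1]
  have hcomm : Q * X = X * Q := by rw [hQX, hXQ]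
  have hs := commute_psqrt hX hcomm
  set s := psqrt X with hsdef
  have hs2 : s * s = X := psqrt_mul_self hX
  have hsh : sᴴ = s := psqrt_herm hX
  have e1 : s * (Q * s) = X := by rw [hs, ← mul_assoc, hs2, hXQ]
  have e2 : (s * Q) * s = X := by rw [mul_assoc]; exact e1
  have e3 : (s * Q) * (Q * s) = X := by
    rw [mul_assoc, ← mul_assoc Q Q s, hQi]; exact e1
  have hz : (s - Q * s)ᴴ * (s - Q * s) = 0 := by
    have hct : (s - Q * s)ᴴ = s - s * Q := by
      simp [Matrix.conjTranspose_sub, Matrix.conjTranspose_mul, hsh, hQh]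
    rw [hct, sub_mul, mul_sub, mul_sub, hs2, e1, e2, e3]
    simp
  have := Matrix.conjTranspose_mul_self_eq_zero.mp hz
  have : Q * s = s := by
    have h' := sub_eq_zero.mp this
    exact h'.symm
  exact this

lemma absorb_right {X Q : Matrix n n ℂ} (hX : X.PosSemidef) (hQh : Qᴴ = Q)
    (hQi : Q * Q = Q) (hQX : Q * X = X) : psqrt X * Q = psqrt X := by
  have h := absorb_left hX hQh hQi hQX
  calc psqrt X * Q = (Qᴴ * (psqrt X)ᴴ)ᴴ := by simp [Matrix.conjTranspose_mul]
    _ = (Q * psqrt X)ᴴ := by rw [hQh, psqrt_herm hX]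
    _ = psqrt X := by rw [h, psqrt_herm hX]

lemma psd_mul_comm {X Y : Matrix n n ℂ} (hX : X.PosSemidef) (hY : Y.PosSemidef)
    (h : X * Y = Y * X) : (X * Y).PosSemidef := by
  have hs : Y * psqrt X = psqrt X * Y := commute_psqrt hX h.symm
  have h2 : (psqrt X)ᴴ * Y * psqrt X = X * Y := by
    rw [psqrt_herm hX, mul_assoc, hs, ← mul_assoc, psqrt_mul_self hX]
  rw [← h2]
  exact hY.conjTranspose_mul_mul_same (psqrt X)

lemma mulVec_eq_zero_of_sq {s : Matrix n n ℂ} (hsh : sᴴ = s) {z : n → ℂ}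
    (h : (s * s) *ᵥ z = 0) : s *ᵥ z = 0 := by
  apply dotProduct_star_self_eq_zero.mp
  calc star (s *ᵥ z) ⬝ᵥ (s *ᵥ z) = (star z ᵥ* sᴴ) ⬝ᵥ (s *ᵥ z) := by rw [Matrix.star_mulVec]
    _ = star z ⬝ᵥ (sᴴ *ᵥ (s *ᵥ z)) := (Matrix.dotProduct_mulVec _ _ _).symm
    _ = star z ⬝ᵥ ((sᴴ * s) *ᵥ z) := by rw [Matrix.mulVec_mulVec]
    _ = 0 := by rw [hsh, h, dotProduct_zero]

end GeoAux

namespace GeoAux2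
open Matrix GeoAux
variable {n : Type*} [Fintype n] [DecidableEq n]
variable {A Ap : Matrix n n ℂ}

set_option linter.unusedSectionVars false

lemma mp_unique {X Y : Matrix n n ℂ} (hX : IsMPInv A X) (hY : IsMPInv A Y) : X = Y := by
  obtain ⟨hx1, hx2, hx3, hx4⟩ := hX
  obtain ⟨hy1, hy2, hy3, hy4⟩ := hY
  have hXXA : X * Xᴴ * Aᴴ = X := by
    calc X * Xᴴ * Aᴴ = X * (A * X)ᴴ := by simp only [conjTranspose_mul, mul_assoc]
      _ = X * (A * X) := by rw [hx3]
      _ = X := by rw [← mul_assoc, hx2]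
  have h1 : X = X * A * Y := by
    calc X = X * Xᴴ * Aᴴ := hXXA.symm
      _ = X * Xᴴ * (A * Y * A)ᴴ := by rw [hy1]
      _ = (X * Xᴴ * Aᴴ) * (A * Y)ᴴ := by simp only [conjTranspose_mul, mul_assoc]
      _ = X * (A * Y) := by rw [hXXA, hy3]
      _ = X * A * Y := by rw [mul_assoc]
  have hAYY : Aᴴ * Yᴴ * Y = Y := by
    calc Aᴴ * Yᴴ * Y = (Y * A)ᴴ * Y := by rw [conjTranspose_mul]
      _ = (Y * A) * Y := by rw [hy4]
      _ = Y := hy2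
  have h2 : Y = X * A * Y := by
    calc Y = Aᴴ * Yᴴ * Y := hAYY.symm
      _ = (A * X * A)ᴴ * Yᴴ * Y := by rw [hx1]
      _ = Aᴴ * Xᴴ * (Aᴴ * Yᴴ * Y) := by simp only [conjTranspose_mul, mul_assoc]
      _ = Aᴴ * Xᴴ * Y := by rw [hAYY]
      _ = (X * A)ᴴ * Y := by rw [conjTranspose_mul]
      _ = X * A * Y := by rw [hx4]
  rw [h1, ← h2]

lemma mp_herm (hAh : Aᴴ = A) (h : IsMPInv A Ap) : Apᴴ = Ap := by
  obtain ⟨h1, h2, h3, h4⟩ := h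
  have hmp : IsMPInv A Apᴴ := by
    refine ⟨?_, ?_, ?_, ?_⟩
    · calc A * Apᴴ * A = (Aᴴ * Ap * Aᴴ)ᴴ := by
            simp only [conjTranspose_mul, conjTranspose_conjTranspose, mul_assoc]
        _ = (A * Ap * A)ᴴ := by rw [hAh]
        _ = Aᴴ := by rw [h1]
        _ = A := hAh
    · calc Apᴴ * A * Apᴴ = (Ap * Aᴴ * Ap)ᴴ := by
            simp only [conjTranspose_mul, conjTranspose_conjTranspose, mul_assoc]
        _ = (Ap * A * Ap)ᴴ := by rw [hAh]
        _ = Apᴴ := by rw [h2]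
    · have e : A * Apᴴ = Ap * A := by
        calc A * Apᴴ = (Ap * Aᴴ)ᴴ := by
              simp only [conjTranspose_mul, conjTranspose_conjTranspose]
          _ = (Ap * A)ᴴ := by rw [hAh]
          _ = Ap * A := h4
      rw [e, h4]
    · have e : Apᴴ * A = A * Ap := by
        calc Apᴴ * A = (Aᴴ * Ap)ᴴ := by
              simp only [conjTranspose_mul, conjTranspose_conjTranspose]
          _ = (A * Ap)ᴴ := by rw [hAh]
          _ = A * Ap := h3
      rw [e, h3]
  exact mp_unique hmp ⟨h1, h2, h3, h4⟩

lemma mp_psd (hA : A.PosSemidef) (h : IsMPInv A Ap) : Ap.PosSemidef := by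
  have hm := mp_herm hA.1 h
  have e : Apᴴ * A * Ap = Ap := by rw [hm, h.2.1]
  rw [← e]
  exact hA.conjTranspose_mul_mul_same Ap

lemma mp_comm (hA : A.PosSemidef) (h : IsMPInv A Ap) : Ap * A = A * Ap := by
  have hm := mp_herm hA.1 h
  calc Ap * A = (Ap * A)ᴴ := h.2.2.2.symm
    _ = Aᴴ * Apᴴ := conjTranspose_mul _ _
    _ = A * Ap := by rw [hA.1, hm]
end GeoAux2

namespace GeoAux3
open Matrix GeoAux GeoAux2
variable {n : Type*} [Fintype n] [DecidableEq n]

set_option linter.unusedSectionVars false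

/-- Intertwining: √(T Tᴴ) T = T √(Tᴴ T). -/
lemma intertwine (T : Matrix n n ℂ) :
    psqrt (T * Tᴴ) * T = T * psqrt (Tᴴ * T) := by
  set D := psqrt (Tᴴ * T) with hD
  set C := psqrt (T * Tᴴ) with hC
  have hDpsd : D.PosSemidef := psqrt_posSemidef (posSemidef_conjTranspose_mul_self T)
  have hCpsd : C.PosSemidef := psqrt_posSemidef (posSemidef_self_mul_conjTranspose T)
  have hD2 : D * D = Tᴴ * T := psqrt_mul_self (posSemidef_conjTranspose_mul_self T)
  have hC2 : C * C = T * Tᴴ := psqrt_mul_self (posSemidef_self_mul_conjTranspose T)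
  set H : Matrix (n ⊕ n) (n ⊕ n) ℂ := fromBlocks 0 Tᴴ T 0 with hH
  have hHh : Hᴴ = H := by
    rw [hH, fromBlocks_conjTranspose]
    simp
  have hH2 : H * H = fromBlocks (Tᴴ * T) 0 0 (T * Tᴴ) := by
    rw [hH, fromBlocks_multiply]
    simp
  have hH2psd : (H * H).PosSemidef := by
    have : H * H = Hᴴ * H := by rw [hHh]
    rw [this]
    exact posSemidef_conjTranspose_mul_self H
  set W : Matrix (n ⊕ n) (n ⊕ n) ℂ := fromBlocks D 0 0 C with hW
  have hWpsd : W.PosSemidef := by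
    have hfact : W = (fromBlocks (psqrt D) 0 0 (psqrt C))ᴴ * (fromBlocks (psqrt D) 0 0 (psqrt C)) := by
      rw [fromBlocks_conjTranspose, fromBlocks_multiply]
      simp [psqrt_herm hDpsd, psqrt_herm hCpsd, psqrt_mul_self hDpsd, psqrt_mul_self hCpsd, hW]
    rw [hfact]
    exact posSemidef_conjTranspose_mul_self _
  have hW2 : W * W = H * H := by
    rw [hW, fromBlocks_multiply, hH2]
    simp [hD2, hC2]
  have hWsq : W = psqrt (H * H) := psqrt_unique hH2psd hWpsd hW2
  have hcomm : H * (H * H) = (H * H) * H := by simp only [mul_assoc]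
  have hKH : H * psqrt (H * H) = psqrt (H * H) * H := commute_psqrt hH2psd hcomm
  rw [← hWsq] at hKH
  have hHW : H * W = fromBlocks 0 (Tᴴ * C) (T * D) 0 := by
    rw [hH, hW, fromBlocks_multiply]
    simp
  have hWH : W * H = fromBlocks 0 (D * Tᴴ) (C * T) 0 := by
    rw [hH, hW, fromBlocks_multiply]
    simp
  rw [hHW, hWH] at hKH
  ext i j
  have h21 := congr_fun (congr_fun hKH (Sum.inr i)) (Sum.inl j)
  simpa [fromBlocks] using h21.symm

end GeoAux3

namespace GeoAux4
open Matrix GeoAux GeoAux2 GeoAux3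
variable {n : Type*} [Fintype n] [DecidableEq n]

set_option linter.unusedSectionVars false

local notation "e" => WithLp.equiv 2 (n → ℂ)

lemma toEuclideanLin_mul_apply (X Y : Matrix n n ℂ) (v : EuclideanSpace ℂ n) :
    Matrix.toEuclideanLin (X * Y) v = Matrix.toEuclideanLin X (Matrix.toEuclideanLin Y v) := by
  simp only [Matrix.toEuclideanLin_apply, Equiv.apply_symm_apply, Matrix.mulVec_mulVec]

lemma toEuclideanLin_eq_zero_iff (X : Matrix n n ℂ) (v : EuclideanSpace ℂ n) :
    Matrix.toEuclideanLin X v = 0 ↔ X *ᵥ (e v) = 0 := by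
  rw [Matrix.toEuclideanLin_apply]
  constructor
  · intro h
    have := congrArg (e) h
    simpa using this
  · intro h
    rw [show X *ᵥ v.ofLp = 0 from h]
    simp

lemma proj_fix {X Q : Matrix n n ℂ} (hQh : Qᴴ = Q) (hQi : Q * Q = Q) (hXQ : X * Q = X)
    {v : EuclideanSpace ℂ n} (hv : v ∈ msupp X) : Matrix.toEuclideanLin Q v = v := by
  set u : EuclideanSpace ℂ n := Matrix.toEuclideanLin Q v - v with hu
  have hker : u ∈ LinearMap.ker (Matrix.toEuclideanLin X) := by
    rw [LinearMap.mem_ker, hu, map_sub, ← toEuclideanLin_mul_apply, hXQ, sub_self]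
  have h1 : inner ℂ u v = 0 := (Submodule.mem_orthogonal _ v).mp hv u hker
  have hQu : Matrix.toEuclideanLin Q u = 0 := by
    rw [hu, map_sub, ← toEuclideanLin_mul_apply, hQi, sub_self]
  have h2 : inner ℂ u (Matrix.toEuclideanLin Q v) = 0 := by
    have := Matrix.toEuclideanLin_conjTranspose_eq_adjoint Q
    rw [hQh] at this
    calc inner ℂ u (Matrix.toEuclideanLin Q v)
        = inner ℂ (LinearMap.adjoint (Matrix.toEuclideanLin Q) u) v :=
          (LinearMap.adjoint_inner_left _ _ _).symm
      _ = inner ℂ (Matrix.toEuclideanLin Q u) v := by rw [← this]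
      _ = (0 : ℂ) := by rw [hQu, inner_zero_left]
  have h3 : inner ℂ u u = 0 := by
    calc inner ℂ u u = inner ℂ u (Matrix.toEuclideanLin Q v - v) := by rw [← hu]
      _ = inner ℂ u (Matrix.toEuclideanLin Q v) - inner ℂ u v := inner_sub_right _ _ _
      _ = 0 := by rw [h1, h2, sub_zero]
  have h4 : u = 0 := inner_self_eq_zero.mp h3
  have := sub_eq_zero.mp h4
  exact this

lemma mem_msupp_proj_fix_mulVec {X Q : Matrix n n ℂ} (hQh : Qᴴ = Q) (hQi : Q * Q = Q)
    (hXQ : X * Q = X) {v : EuclideanSpace ℂ n} (hv : v ∈ msupp X) :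
    Q *ᵥ (e v) = e v := by
  have := proj_fix hQh hQi hXQ hv
  have h2 := congrArg (e) this
  simpa [Matrix.toEuclideanLin_apply] using h2

lemma msupp_nonzero_vec {P : Matrix n n ℂ} (hPne : P ≠ 0) :
    ∃ v ∈ msupp P, v ≠ 0 := by
  rw [← Submodule.ne_bot_iff]
  intro hbot
  have : LinearMap.ker (Matrix.toEuclideanLin P) = ⊤ := by
    have h := hbot
    rw [msupp] at h
    have h2 := congrArg Submodule.orthogonal h
    rw [Submodule.orthogonal_orthogonal, Submodule.bot_orthogonal_eq_top] at h2
    exact h2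
  have hP0 : Matrix.toEuclideanLin P = 0 := LinearMap.ker_eq_top.mp this
  exact hPne (by simpa using Matrix.toEuclideanLin.map_eq_zero_iff.mp hP0)

end GeoAux4

namespace GeoAux5
open Matrix GeoAux GeoAux2 GeoAux3 GeoAux4
variable {n : Type*} [Fintype n] [DecidableEq n]
variable {A Ap : Matrix n n ℂ}

set_option linter.unusedSectionVars false
set_option maxHeartbeats 1000000

lemma Pi_herm (hAp : IsMPInv A Ap) : (A * Ap)ᴴ = A * Ap := hAp.2.2.1

lemma Pi_idem (hAp : IsMPInv A Ap) : (A * Ap) * (A * Ap) = A * Ap := by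
  have : (A * Ap) * (A * Ap) = ((A * Ap) * A) * Ap := by simp only [mul_assoc]
  rw [this, hAp.1]

lemma Pi_A (hAp : IsMPInv A Ap) : (A * Ap) * A = A := hAp.1

lemma A_Pi (hA : A.PosSemidef) (hAp : IsMPInv A Ap) : A * (A * Ap) = A := by
  rw [← mp_comm hA hAp, ← mul_assoc, hAp.1]

lemma Pi_Ap (hA : A.PosSemidef) (hAp : IsMPInv A Ap) : (A * Ap) * Ap = Ap := by
  rw [← mp_comm hA hAp]; exact hAp.2.1

lemma Pi_psd (hAp : IsMPInv A Ap) : (A * Ap).PosSemidef := by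
  have h : (A * Ap)ᴴ * (A * Ap) = A * Ap := by rw [Pi_herm hAp, Pi_idem hAp]
  rw [← h]; exact posSemidef_conjTranspose_mul_self _

lemma Pi_sqrtA (hA : A.PosSemidef) (hAp : IsMPInv A Ap) :
    (A * Ap) * psqrt A = psqrt A :=
  absorb_left hA (Pi_herm hAp) (Pi_idem hAp) (Pi_A hAp)

lemma Pi_sqrtAp (hA : A.PosSemidef) (hAp : IsMPInv A Ap) :
    (A * Ap) * psqrt Ap = psqrt Ap :=
  absorb_left (mp_psd hA hAp) (Pi_herm hAp) (Pi_idem hAp) (Pi_Ap hA hAp)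

lemma sqrt_comm (hA : A.PosSemidef) (hAp : IsMPInv A Ap) :
    psqrt A * psqrt Ap = psqrt Ap * psqrt A := by
  have hApp := mp_psd hA hAp
  have h1 : Ap * psqrt A = psqrt A * Ap := commute_psqrt hA (mp_comm hA hAp)
  exact commute_psqrt hApp h1.symm

lemma sqrt_mul_sqrt (hA : A.PosSemidef) (hAp : IsMPInv A Ap) :
    psqrt A * psqrt Ap = A * Ap := by
  have hApp := mp_psd hA hAp
  have h2 := sqrt_comm hA hAp
  have hps : (psqrt A * psqrt Ap).PosSemidef :=
    psd_mul_comm (psqrt_posSemidef hA) (psqrt_posSemidef hApp) h2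
  have hsq : (psqrt A * psqrt Ap) ^ 2 = (A * Ap) ^ 2 := by
    have e1 : (psqrt A * psqrt Ap) * (psqrt A * psqrt Ap)
        = psqrt A * (psqrt Ap * psqrt A) * psqrt Ap := by simp only [mul_assoc]
    rw [pow_two, pow_two, e1, ← h2, ← mul_assoc]
    have e2 : psqrt A * psqrt A * psqrt Ap * psqrt Ap
        = (psqrt A * psqrt A) * (psqrt Ap * psqrt Ap) := by simp only [mul_assoc]
    rw [e2, psqrt_mul_self hA, psqrt_mul_self hApp, Pi_idem hAp]
  have hXs : ((A * Ap) ^ 2).PosSemidef := by rw [pow_two, Pi_idem hAp]; exact Pi_psd hAp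
  exact (psqrt_unique hXs hps (by rw [← pow_two, hsq])).trans
    (psqrt_unique hXs (Pi_psd hAp) (pow_two _).symm).symm

lemma sqrtAp_mul_sqrtA (hA : A.PosSemidef) (hAp : IsMPInv A Ap) :
    psqrt Ap * psqrt A = A * Ap := by
  rw [← sqrt_comm hA hAp]; exact sqrt_mul_sqrt hA hAp

end GeoAux5

namespace GeoAux6
open Matrix GeoAux GeoAux2 GeoAux3 GeoAux4 GeoAux5
variable {n : Type*} [Fintype n] [DecidableEq n]
variable {A B Ap Bp : Matrix n n ℂ}

set_option linter.unusedSectionVars false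
set_option maxHeartbeats 1000000

lemma core (hA : A.PosSemidef) (hB : B.PosSemidef)
    (hAp : IsMPInv A Ap) (hBp : IsMPInv B Bp)
    {lam : ℝ} (hlam : lam ≠ 0) {x : n → ℂ}
    (hxA : (A * Ap) *ᵥ x = x) (hxB : (B * Bp) *ᵥ x = x)
    (hM : (psqrt A * psqrt (psqrt Ap * B * psqrt Ap) * psqrt A) *ᵥ x = (lam : ℂ) • x) :
    (psqrt Bp * psqrt (psqrt B * Ap * psqrt B) * psqrt Bp) *ᵥ x = ((lam : ℂ))⁻¹ • x := by
  have hApp := mp_psd hA hAp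
  have hBpp := mp_psd hB hBp
  set a := psqrt A with ha
  set a' := psqrt Ap with ha'
  set b := psqrt B with hb
  set b' := psqrt Bp with hb'
  have hah : aᴴ = a := psqrt_herm hA
  have ha'h : a'ᴴ = a' := psqrt_herm hApp
  have hbh : bᴴ = b := psqrt_herm hB
  have hb'h : b'ᴴ = b' := psqrt_herm hBpp
  have haa : a * a = A := psqrt_mul_self hA
  have ha'a' : a' * a' = Ap := psqrt_mul_self hApp
  have hbb : b * b = B := psqrt_mul_self hB
  have hb'b' : b' * b' = Bp := psqrt_mul_self hBpp
  have hCinner : (a' * B * a').PosSemidef := by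
    have := hB.conjTranspose_mul_mul_same a'
    rwa [ha'h] at this
  have hDinner : (b * Ap * b).PosSemidef := by
    have := hApp.conjTranspose_mul_mul_same b
    rwa [hbh] at this
  set C := psqrt (a' * B * a') with hC
  set D := psqrt (b * Ap * b) with hD
  have hCh : Cᴴ = C := psqrt_herm hCinner
  have hDh : Dᴴ = D := psqrt_herm hDinner
  have hCC : C * C = a' * B * a' := psqrt_mul_self hCinner
  have hDD : D * D = b * Ap * b := psqrt_mul_self hDinner
  set T := a' * b with hT
  have hTH : Tᴴ = b * a' := by rw [hT, conjTranspose_mul, hbh, ha'h]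
  have hTT' : T * Tᴴ = a' * B * a' := by
    rw [hT, hTH, ← hbb]; simp only [mul_assoc]
  have hT'T : Tᴴ * T = b * Ap * b := by
    rw [hT, hTH, ← ha'a']; simp only [mul_assoc]
  have hCT : C * T = T * D := by
    have := intertwine T
    rw [hTT', hT'T] at this
    rw [hC, hD]; exact this
  have hPia'a : a' * a = A * Ap := sqrtAp_mul_sqrtA hA hAp
  have hPi'b'b : b' * b = B * Bp := sqrtAp_mul_sqrtA hB hBp
  have hPi'bb' : b * b' = B * Bp := sqrt_mul_sqrt hB hBp
  have hPiC : (A * Ap) * C = C := by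
    apply absorb_left hCinner (Pi_herm hAp) (Pi_idem hAp)
    calc (A * Ap) * (a' * B * a') = ((A * Ap) * a') * B * a' := by simp only [mul_assoc]
      _ = a' * B * a' := by rw [Pi_sqrtAp hA hAp]
  have hlamC : (lam : ℂ) ≠ 0 := Complex.ofReal_ne_zero.mpr hlam
  -- Step 1
  have e1 : (C * a) *ᵥ x = (lam : ℂ) • (a' *ᵥ x) := by
    have h := congrArg (fun y => a' *ᵥ y) hM
    simp only [Matrix.mulVec_mulVec, Matrix.mulVec_smul] at h
    have hmat1 : a' * (a * C * a) = C * a := by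
      calc a' * (a * C * a) = ((a' * a) * C) * a := by simp only [mul_assoc]
        _ = C * a := by rw [hPia'a, hPiC]
    rwa [hmat1] at h
  -- Step 2
  have e2 : C *ᵥ (a' *ᵥ x) = ((lam : ℂ))⁻¹ • ((T * b) *ᵥ x) := by
    have h := congrArg (fun y => C *ᵥ y) e1
    simp only [Matrix.mulVec_mulVec, Matrix.mulVec_smul] at h
    -- h : (C * (C * a)) *ᵥ x = lam • (C *ᵥ (a' *ᵥ x))
    have hmat2 : C * (C * a) = (a' * B) * (a' * a) := by
      calc C * (C * a) = (C * C) * a := by simp only [mul_assoc]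
        _ = (a' * B) * (a' * a) := by rw [hCC]; simp only [mul_assoc]
    rw [hmat2, ← Matrix.mulVec_mulVec, hPia'a, hxA] at h
    have hab : a' * B = T * b := by rw [hT, ← hbb]; simp only [mul_assoc]
    rw [hab] at h
    rw [eq_inv_smul_iff₀ hlamC, Matrix.mulVec_mulVec]
    exact h.symm
  set z : n → ℂ := D *ᵥ (b' *ᵥ x) - ((lam : ℂ))⁻¹ • (b *ᵥ x) with hz
  have hTz : T *ᵥ z = 0 := by
    have hm : T * (D * b') = C * (a' * (b * b')) := by
      rw [← mul_assoc, ← hCT, hT]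
      simp only [mul_assoc]
    have ht1 : T *ᵥ (D *ᵥ (b' *ᵥ x)) = ((lam : ℂ))⁻¹ • ((T * b) *ᵥ x) := by
      calc T *ᵥ (D *ᵥ (b' *ᵥ x)) = (T * (D * b')) *ᵥ x := by
            simp only [Matrix.mulVec_mulVec]
        _ = (C * (a' * (b * b'))) *ᵥ x := by rw [hm]
        _ = (C * a') *ᵥ ((B * Bp) *ᵥ x) := by
            rw [hPi'bb', Matrix.mulVec_mulVec]
            simp only [mul_assoc]
        _ = (C * a') *ᵥ x := by rw [hxB]
        _ = C *ᵥ (a' *ᵥ x) := by rw [← Matrix.mulVec_mulVec]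
        _ = ((lam : ℂ))⁻¹ • ((T * b) *ᵥ x) := e2
    rw [hz, Matrix.mulVec_sub, ht1, Matrix.mulVec_smul, Matrix.mulVec_mulVec, sub_self]
  have hDz : D *ᵥ z = 0 := by
    apply mulVec_eq_zero_of_sq hDh
    rw [hDD, ← hT'T, ← Matrix.mulVec_mulVec, hTz, Matrix.mulVec_zero]
  have hPibz : (A * Ap) *ᵥ (b *ᵥ z) = 0 := by
    have : (A * Ap) * b = a * T := by
      rw [← sqrt_mul_sqrt hA hAp, hT]; simp only [mul_assoc]; rfl
    rw [Matrix.mulVec_mulVec, this, ← Matrix.mulVec_mulVec, hTz, Matrix.mulVec_zero]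
  have hz0 : z = 0 := by
    apply dotProduct_star_self_eq_zero.mp
    have t1 : star z ⬝ᵥ (D *ᵥ (b' *ᵥ x)) = 0 := by
      rw [Matrix.dotProduct_mulVec]
      have : star z ᵥ* D = 0 := by
        rw [← hDh, ← Matrix.star_mulVec, hDz, star_zero]
      rw [this, zero_dotProduct]
    have t2 : star z ⬝ᵥ (b *ᵥ x) = 0 := by
      have hzb : star z ᵥ* b = star (b *ᵥ z) := by rw [Matrix.star_mulVec, hbh]
      have hst : star ((A * Ap) *ᵥ (b *ᵥ z)) = star (b *ᵥ z) ᵥ* (A * Ap) := by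
        rw [Matrix.star_mulVec, Pi_herm hAp]
      rw [Matrix.dotProduct_mulVec, hzb, ← hxA, Matrix.dotProduct_mulVec, ← hst, hPibz,
        star_zero, zero_dotProduct]
    calc star z ⬝ᵥ z
        = star z ⬝ᵥ (D *ᵥ (b' *ᵥ x)) - star z ⬝ᵥ (((lam : ℂ))⁻¹ • (b *ᵥ x)) := by
          rw [hz]; exact dotProduct_sub _ _ _
      _ = 0 := by
          rw [t1, dotProduct_smul, t2, smul_zero, sub_zero]
  have hfin : D *ᵥ (b' *ᵥ x) = ((lam : ℂ))⁻¹ • (b *ᵥ x) := sub_eq_zero.mp hz0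
  have hsplit : (b' * D * b') *ᵥ x = b' *ᵥ (D *ᵥ (b' *ᵥ x)) := by
    simp only [Matrix.mulVec_mulVec, mul_assoc]
  calc (b' * D * b') *ᵥ x = b' *ᵥ (D *ᵥ (b' *ᵥ x)) := hsplit
    _ = b' *ᵥ (((lam : ℂ))⁻¹ • (b *ᵥ x)) := by rw [hfin]
    _ = ((lam : ℂ))⁻¹ • ((b' * b) *ᵥ x) := by rw [Matrix.mulVec_smul, Matrix.mulVec_mulVec]
    _ = ((lam : ℂ))⁻¹ • x := by rw [hPi'b'b, hxB]

end GeoAux6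

namespace GeoAux7
open Matrix GeoAux GeoAux2 GeoAux3 GeoAux4 GeoAux5 GeoAux6
variable {n : Type*} [Fintype n] [DecidableEq n]
variable {A B Ap Bp : Matrix n n ℂ}

set_option linter.unusedSectionVars false
set_option maxHeartbeats 1000000

lemma lam_nonneg_and (hA : A.PosSemidef) (hB : B.PosSemidef) (hAp : IsMPInv A Ap)
    {lam : ℝ} {x : n → ℂ} (hx : x ≠ 0)
    (hxA : (A * Ap) *ᵥ x = x)
    (hM : (psqrt A * psqrt (psqrt Ap * B * psqrt Ap) * psqrt A) *ᵥ x = (lam : ℂ) • x) :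
    0 ≤ lam ∧ (lam = 0 → B *ᵥ x = 0) := by
  have hApp := mp_psd hA hAp
  set a := psqrt A with ha
  set a' := psqrt Ap with ha'
  have hah : aᴴ = a := psqrt_herm hA
  have ha'h : a'ᴴ = a' := psqrt_herm hApp
  have hCinner : (a' * B * a').PosSemidef := by
    have := hB.conjTranspose_mul_mul_same a'
    rwa [ha'h] at this
  set C := psqrt (a' * B * a') with hC
  have hCpsd : C.PosSemidef := psqrt_posSemidef hCinner
  have hCC : C * C = a' * B * a' := psqrt_mul_self hCinner
  have hMpsd : (a * C * a).PosSemidef := by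
    have := hCpsd.conjTranspose_mul_mul_same a
    rwa [hah] at this
  have hxx : star x ⬝ᵥ x = ((∑ i, Complex.normSq (x i) : ℝ) : ℂ) := by
    rw [dotProduct]
    push_cast
    refine Finset.sum_congr rfl fun i _ => ?_
    simpa using (Complex.normSq_eq_conj_mul_self (z := x i)).symm
  set r := ∑ i, Complex.normSq (x i) with hr
  have hrpos : 0 < r := by
    have hi : ∃ i, x i ≠ 0 := Function.ne_iff.mp hx
    obtain ⟨i, hi⟩ := hi
    refine Finset.sum_pos' (fun j _ => Complex.normSq_nonneg _) ⟨i, Finset.mem_univ i, ?_⟩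
    exact Complex.normSq_pos.mpr hi
  have h0 : (0 : ℂ) ≤ star x ⬝ᵥ ((a * C * a) *ᵥ x) := hMpsd.dotProduct_mulVec_nonneg x
  rw [hM, dotProduct_smul, hxx] at h0
  have hlr : 0 ≤ lam * r := by
    rw [smul_eq_mul, ← Complex.ofReal_mul] at h0
    exact Complex.zero_le_real.mp h0
  have hlam0 : 0 ≤ lam := by
    by_contra hneg
    push_neg at hneg
    nlinarith
  refine ⟨hlam0, fun hlz => ?_⟩
  have hMx : (a * C * a) *ᵥ x = 0 := by rw [hM, hlz]; simp
  have hCax : C *ᵥ (a *ᵥ x) = 0 := by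
    apply (hCpsd.dotProduct_mulVec_zero_iff (a *ᵥ x)).mp
    have hst : star (a *ᵥ x) = star x ᵥ* a := by rw [Matrix.star_mulVec, hah]
    rw [hst, ← Matrix.dotProduct_mulVec]
    have : a *ᵥ (C *ᵥ (a *ᵥ x)) = (a * C * a) *ᵥ x := by
      simp only [Matrix.mulVec_mulVec, mul_assoc]
    rw [this, hMx, dotProduct_zero]
  have h2 : (a' * B) *ᵥ x = 0 := by
    have h := congrArg (fun y => C *ᵥ y) hCax
    simp only [Matrix.mulVec_mulVec, Matrix.mulVec_zero] at h
    have hmat : C * (C * a) = (a' * B) * (a' * a) := by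
      have : C * (C * a) = (C * C) * a := by simp only [mul_assoc]
      rw [this, hCC]; simp only [mul_assoc]
    rw [← Matrix.mulVec_mulVec] at h
    rw [Matrix.mulVec_mulVec, hmat, ← Matrix.mulVec_mulVec,
      sqrtAp_mul_sqrtA hA hAp, hxA] at h
    exact h
  have h3 : (A * Ap) *ᵥ (B *ᵥ x) = 0 := by
    have hm : (A * Ap) * B = a * (a' * B) := by
      rw [← sqrt_mul_sqrt hA hAp]; simp only [mul_assoc]; rfl
    rw [Matrix.mulVec_mulVec, hm, ← Matrix.mulVec_mulVec, h2, Matrix.mulVec_zero]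
  have h4 : star x ⬝ᵥ (B *ᵥ x) = 0 := by
    have hkey : star ((A * Ap) *ᵥ x) ⬝ᵥ (B *ᵥ x) = 0 := by
      rw [Matrix.star_mulVec, Pi_herm hAp, ← Matrix.dotProduct_mulVec,
        Matrix.mulVec_mulVec]
      rw [← Matrix.mulVec_mulVec, h3, dotProduct_zero]
    rwa [hxA] at hkey
  exact (hB.dotProduct_mulVec_zero_iff x).mp h4

end GeoAux7

open Matrix GeoAux GeoAux2 GeoAux3 GeoAux4 GeoAux5 GeoAux6 GeoAux7 in
/-- If a nonzero PSD matrix P is supported in supp(A) ∩ supp(B) and in the eigenspace of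
M(A,B) with eigenvalue lam, then lam > 0 and P is supported in the eigenspace of
M(B⁺,A⁺) with eigenvalue 1/lam. -/
theorem supp_le_eigenspace_geoMean_inv
    {n : Type*} [Fintype n] [DecidableEq n]
    (A B Ap Bp P : Matrix n n ℂ) (hA : A.PosSemidef) (hB : B.PosSemidef)
    (hAp : IsMPInv A Ap) (hBp : IsMPInv B Bp)
    (hP : P.PosSemidef) (hPne : P ≠ 0)
    (lam : ℝ)
    (hPsupp : msupp P ≤ msupp A ⊓ msupp B)
    (hPeig : msupp P ≤ mker (geoMean A Ap B - (lam : ℂ) • (1 : Matrix n n ℂ))) :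
    0 < lam ∧ msupp P ≤ mker (geoMean Bp B Ap - ((lam⁻¹ : ℝ) : ℂ) • (1 : Matrix n n ℂ)) := by

  have hgeo : geoMean A Ap B = psqrt A * psqrt (psqrt Ap * B * psqrt Ap) * psqrt A := rfl
  have hgeo2 : geoMean Bp B Ap = psqrt Bp * psqrt (psqrt B * Ap * psqrt B) * psqrt Bp := rfl
  have hfacts : ∀ v ∈ msupp P,
      (A * Ap) *ᵥ (WithLp.equiv 2 (n → ℂ) v) = WithLp.equiv 2 (n → ℂ) v ∧
      (B * Bp) *ᵥ (WithLp.equiv 2 (n → ℂ) v) = WithLp.equiv 2 (n → ℂ) v ∧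
      (psqrt A * psqrt (psqrt Ap * B * psqrt Ap) * psqrt A) *ᵥ (WithLp.equiv 2 (n → ℂ) v)
        = (lam : ℂ) • (WithLp.equiv 2 (n → ℂ) v) := by
    intro v hv
    have hvAB := hPsupp hv
    rw [Submodule.mem_inf] at hvAB
    refine ⟨mem_msupp_proj_fix_mulVec (Pi_herm hAp) (Pi_idem hAp) (A_Pi hA hAp) hvAB.1,
      mem_msupp_proj_fix_mulVec (Pi_herm hBp) (Pi_idem hBp) (A_Pi hB hBp) hvAB.2, ?_⟩
    have hk := hPeig hv
    rw [mker, LinearMap.mem_ker, toEuclideanLin_eq_zero_iff] at hk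
    rw [Matrix.sub_mulVec, Matrix.smul_mulVec, Matrix.one_mulVec] at hk
    rw [← hgeo]
    exact sub_eq_zero.mp hk
  obtain ⟨v0, hv0, hv0ne⟩ := msupp_nonzero_vec hPne
  have hx0ne : WithLp.equiv 2 (n → ℂ) v0 ≠ 0 := by
    intro h
    apply hv0ne
    have := congrArg (WithLp.equiv 2 (n → ℂ)).symm h
    simpa using this
  obtain ⟨hfA0, hfB0, hfM0⟩ := hfacts v0 hv0
  have hsign := lam_nonneg_and hA hB hAp hx0ne hfA0 hfM0
  have hlamne : lam ≠ 0 := by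
    intro h0
    have hBx := hsign.2 h0
    have hvAB := hPsupp hv0
    rw [Submodule.mem_inf] at hvAB
    have hker : v0 ∈ LinearMap.ker (Matrix.toEuclideanLin B) := by
      rw [LinearMap.mem_ker, toEuclideanLin_eq_zero_iff]
      exact hBx
    have := (Submodule.mem_orthogonal _ v0).mp hvAB.2 v0 hker
    exact hv0ne (inner_self_eq_zero.mp this)
  have hlampos : 0 < lam := lt_of_le_of_ne hsign.1 (Ne.symm hlamne)
  refine ⟨hlampos, ?_⟩
  intro v hv
  obtain ⟨hfA, hfB, hfM⟩ := hfacts v hv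
  have hcore := core hA hB hAp hBp hlamne hfA hfB hfM
  rw [mker, LinearMap.mem_ker, toEuclideanLin_eq_zero_iff]
  rw [Matrix.sub_mulVec, Matrix.smul_mulVec, Matrix.one_mulVec, hgeo2, hcore,
    Complex.ofReal_inv, sub_self]
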